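/- Let λ ∈ ρ(A_β) and suppose the closed extension à (A_min ⊂ à ⊂ A_max) corresponds to T^λ : V_λ → W_λ̄ as in the λ-dependent parametrization. Then ker(à − λ) = ker T^λ, and ran(à − λ) = ran T^λ ⊕ (H ⊖ W_λ̄) (orthogonal sum). In particular, à − λ is injective iff T^λ is injective, and à − λ is surjective iff T^λ is surjective onto W_λ̄. -/
import Mathlib


open scoped InnerProductSpace

/-- Let `λ ∈ ρ(A_β)` and suppose the closed extension `Ã`
(`A_min ⊂ Ã ⊂ A_max`) corresponds to `T^λ : V_λ → W_λ̄` as in the λ-dependent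
parametrization (Corollary 2.3).  Then `ker (Ã − λ) = ker T^λ` and
`ran (Ã − λ) = ran T^λ ⊕ (H ⊖ W_λ̄)` (orthogonal sum).  In particular `Ã − λ` is
injective iff `T^λ` is injective, and `Ã − λ` is surjective iff `T^λ` is surjective
onto `W_λ̄`.

`A_max` is `A : D →ₗ H`; `Ã` is its restriction to `DAt`; `pr^λ_ζ u = u − (A_β−λ)⁻¹(A−λ)u`;
`T^λ` is a partially defined operator (`LinearPMap`) with `D(T^λ) = pr^λ_ζ D(Ã)`,
`T^λ (pr^λ_ζ u) = P_W ((A−λ)u)`, whose graph together with `W` determines `D(Ã)` by (2.13). -/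
theorem stmt_5
    {H : Type*} [NormedAddCommGroup H] [InnerProductSpace ℂ H] [CompleteSpace H]
    (D D' Dβ DAt : Submodule ℂ H) (hβD : Dβ ≤ D) (hAtD : DAt ≤ D)
    (A : D →ₗ[ℂ] H) (A' : D' →ₗ[ℂ] H) (μ : ℂ)
    (Rμ : H →L[ℂ] H)
    (hμran : ∀ f : H, Rμ f ∈ Dβ)
    (hμleft : ∀ u : D, (u : H) ∈ Dβ → Rμ (A u - μ • (u : H)) = (u : H))
    (hμright : ∀ f : H, A ⟨Rμ f, hβD (hμran f)⟩ - μ • Rμ f = f)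
    -- W_λ̄ : a closed subspace of Z′_λ̄ = ker (A_max′ − λ̄), with orthogonal projection PW
    (W : Submodule ℂ H) (hWclosed : IsClosed (W : Set H))
    (hWZ' : W ≤ (LinearMap.ker (A' - (starRingEnd ℂ μ) • D'.subtype)).map D'.subtype)
    (PW : H →L[ℂ] H)
    (hPWmem : ∀ x : H, PW x ∈ W)
    (hPWfix : ∀ w ∈ W, PW w = w)
    (hPWorth : ∀ x : H, ∀ w ∈ W, ⟪x - PW x, w⟫_ℂ = 0)
    -- the operator T^λ associated with Ã − λ
    (Tμ : H →ₗ.[ℂ] H)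
    (hTran : ∀ x : Tμ.domain, Tμ x ∈ W)
    (hTdom : ∀ x : H, x ∈ Tμ.domain ↔
      ∃ u : D, (u : H) ∈ DAt ∧ (u : H) - Rμ (A u - μ • (u : H)) = x)
    (hTval : ∀ (u : D), (u : H) ∈ DAt →
      ∀ hx : ((u : H) - Rμ (A u - μ • (u : H))) ∈ Tμ.domain,
        Tμ ⟨(u : H) - Rμ (A u - μ • (u : H)), hx⟩ = PW (A u - μ • (u : H)))
    (hchar : ∀ u : D, (u : H) ∈ DAt ↔
      ∃ hx : ((u : H) - Rμ (A u - μ • (u : H))) ∈ Tμ.domain,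
        PW (A u - μ • (u : H)) = Tμ ⟨(u : H) - Rμ (A u - μ • (u : H)), hx⟩) :
    -- ker(Ã − λ) = ker T^λ
    ({x : H | ∃ hx : x ∈ D, x ∈ DAt ∧ A ⟨x, hx⟩ = μ • x}
      = {x : H | ∃ hx : x ∈ Tμ.domain, Tμ ⟨x, hx⟩ = 0}) ∧
    -- ran(Ã − λ) = ran T^λ ⊕ (H ⊖ W_λ̄), orthogonal sum
    ({y : H | ∃ u : D, (u : H) ∈ DAt ∧ A u - μ • (u : H) = y}
      = {y : H | ∃ x : Tμ.domain, ∃ w ∈ Wᗮ, y = Tμ x + w}) ∧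
    -- Ã − λ injective ↔ T^λ injective
    ((∀ u : D, (u : H) ∈ DAt → A u = μ • (u : H) → (u : H) = 0)
      ↔ (∀ x : Tμ.domain, Tμ x = 0 → (x : H) = 0)) ∧
    -- Ã − λ surjective ↔ T^λ surjective onto W_λ̄
    ((∀ y : H, ∃ u : D, (u : H) ∈ DAt ∧ A u - μ • (u : H) = y)
      ↔ (∀ w ∈ W, ∃ x : Tμ.domain, Tμ x = w)) := by
  classical
  have hRD : ∀ f : H, Rμ f ∈ D := fun f => hβD (hμran f)
  -- PW annihilates Wᗮ
  have hPWzero : ∀ w ∈ Wᗮ, PW w = 0 := by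
    intro w hw
    have h1 : ⟪(PW w : H), w⟫_ℂ = 0 :=
      (Submodule.mem_orthogonal W w).mp hw (PW w) (hPWmem w)
    have h2 : ⟪w - PW w, PW w⟫_ℂ = 0 := hPWorth w (PW w) (hPWmem w)
    have h3 : ⟪(PW w : H), PW w⟫_ℂ = 0 := by
      have h4 : ⟪w, PW w⟫_ℂ - ⟪(PW w : H), PW w⟫_ℂ = 0 := by
        rw [← inner_sub_left]; exact h2
      have h5 : ⟪w, PW w⟫_ℂ = 0 := by
        rw [← inner_conj_symm, h1, map_zero]
      rw [h5, zero_sub, neg_eq_zero] at h4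
      exact h4
    exact inner_self_eq_zero.mp h3
  -- g - PW g ∈ Wᗮ
  have hOrthMem : ∀ g : H, g - PW g ∈ Wᗮ := by
    intro g
    rw [Submodule.mem_orthogonal]
    intro u hu
    rw [← inner_conj_symm, hPWorth g u hu, map_zero]
  -- key construction: solving (Ã − μ) v = y with pr v = x
  have key : ∀ (y : H) (x : Tμ.domain), Tμ x = PW y →
      ∃ v : D, (↑v : H) ∈ DAt ∧ A v - μ • (↑v : H) = y ∧ (↑v : H) - Rμ y = (x : H) := by
    intro y x hTx
    obtain ⟨u₀, hu₀, hpr⟩ := (hTdom x).mp x.2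
    set g₀ : H := A u₀ - μ • (↑u₀ : H) with hg₀
    set r : D := ⟨Rμ (y - g₀), hRD _⟩ with hr
    set v : D := u₀ + r with hvdef
    have hAr : A r - μ • (Rμ (y - g₀)) = y - g₀ := hμright (y - g₀)
    have hv : A v - μ • (↑v : H) = y := by
      have hsplit : A v - μ • (↑v : H)
          = (A u₀ - μ • (↑u₀ : H)) + (A r - μ • (↑r : H)) := by
        simp only [hvdef, map_add, Submodule.coe_add, smul_add]
        abel
      rw [hsplit, ← hg₀]
      have : (↑r : H) = Rμ (y - g₀) := rfl
      rw [this, hAr]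
      abel
    have hprv : (↑v : H) - Rμ y = (x : H) := by
      have hcv : (↑v : H) = (↑u₀ : H) + Rμ (y - g₀) := rfl
      rw [hcv, map_sub]
      rw [← hpr]
      abel
    have hx1 : ((↑v : H) - Rμ (A v - μ • (↑v : H))) ∈ Tμ.domain := by
      rw [hv, hprv]; exact x.2
    have heq : (⟨(↑v : H) - Rμ (A v - μ • (↑v : H)), hx1⟩ : Tμ.domain) = x :=
      Subtype.ext (by
        show (↑v : H) - Rμ (A v - μ • (↑v : H)) = (x : H)
        rw [hv]; exact hprv)
    have hvAt : (↑v : H) ∈ DAt := by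
      refine (hchar v).mpr ⟨hx1, ?_⟩
      rw [heq, hv, hTx]
    exact ⟨v, hvAt, hv, hprv⟩
  -- Part 1: kernels agree
  have part1 : ({x : H | ∃ hx : x ∈ D, x ∈ DAt ∧ A ⟨x, hx⟩ = μ • x}
      = {x : H | ∃ hx : x ∈ Tμ.domain, Tμ ⟨x, hx⟩ = 0}) := by
    ext x
    constructor
    · rintro ⟨hx, hAt, hA⟩
      have hg : A ⟨x, hx⟩ - μ • x = 0 := by rw [hA, sub_self]
      have kk : x - Rμ (A ⟨x, hx⟩ - μ • x) = x := by
        rw [hg, map_zero, sub_zero]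
      have hdom : x ∈ Tμ.domain := (hTdom x).mpr ⟨⟨x, hx⟩, hAt, kk⟩
      have hx1 : (x - Rμ (A ⟨x, hx⟩ - μ • x)) ∈ Tμ.domain := by
        rw [kk]; exact hdom
      have hval := hTval ⟨x, hx⟩ hAt hx1
      have heq : (⟨x - Rμ (A ⟨x, hx⟩ - μ • x), hx1⟩ : Tμ.domain) = ⟨x, hdom⟩ :=
        Subtype.ext kk
      refine ⟨hdom, ?_⟩
      rw [← heq, hval, hg, map_zero]
    · rintro ⟨hdx, hT0⟩
      have hTx : Tμ ⟨x, hdx⟩ = PW 0 := by rw [map_zero]; exact hT0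
      obtain ⟨v, hvAt, hv, hprv⟩ := key 0 ⟨x, hdx⟩ hTx
      have hveq : (↑v : H) = x := by
        rw [map_zero, sub_zero] at hprv; exact hprv
      have hxD : x ∈ D := hveq ▸ v.2
      have hvx : (⟨x, hxD⟩ : D) = v := Subtype.ext hveq.symm
      refine ⟨hxD, hveq ▸ hvAt, ?_⟩
      rw [hvx, ← hveq]
      exact sub_eq_zero.mp hv
  -- Part 2: ranges agree
  have part2 : ({y : H | ∃ u : D, (u : H) ∈ DAt ∧ A u - μ • (u : H) = y}
      = {y : H | ∃ x : Tμ.domain, ∃ w ∈ Wᗮ, y = Tμ x + w}) := by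
    ext y
    constructor
    · rintro ⟨u, hu, hy⟩
      have hdom : ((u : H) - Rμ (A u - μ • (u : H))) ∈ Tμ.domain :=
        (hTdom _).mpr ⟨u, hu, rfl⟩
      refine ⟨⟨_, hdom⟩, y - PW y, hOrthMem y, ?_⟩
      rw [hTval u hu hdom, hy]
      abel
    · rintro ⟨x, w, hw, hy⟩
      have hPWy : Tμ x = PW y := by
        rw [hy, map_add, hPWfix _ (hTran x), hPWzero w hw, add_zero]
      obtain ⟨v, hvAt, hv, -⟩ := key y x hPWy
      exact ⟨v, hvAt, hv⟩
  refine ⟨part1, part2, ?_, ?_⟩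
  -- Part 3: injectivity
  · constructor
    · intro h x hT0
      have hmem : (x : H) ∈ {x : H | ∃ hx : x ∈ D, x ∈ DAt ∧ A ⟨x, hx⟩ = μ • x} := by
        rw [part1]; exact ⟨x.2, hT0⟩
      obtain ⟨hxD, hAt, hA⟩ := hmem
      exact h ⟨(x : H), hxD⟩ hAt hA
    · intro h u hAt hA
      have hmem : (↑u : H) ∈ {x : H | ∃ hx : x ∈ Tμ.domain, Tμ ⟨x, hx⟩ = 0} := by
        rw [← part1]; exact ⟨u.2, hAt, hA⟩
      obtain ⟨hdx, hT0⟩ := hmem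
      exact h ⟨(↑u : H), hdx⟩ hT0
  -- Part 4: surjectivity
  · constructor
    · intro h w hw
      obtain ⟨u, hu, hy⟩ := h w
      have hdom : ((u : H) - Rμ (A u - μ • (u : H))) ∈ Tμ.domain :=
        (hTdom _).mpr ⟨u, hu, rfl⟩
      refine ⟨⟨_, hdom⟩, ?_⟩
      rw [hTval u hu hdom, hy, hPWfix w hw]
    · intro h y
      obtain ⟨x, hx⟩ := h (PW y) (hPWmem y)
      obtain ⟨v, hvAt, hv, -⟩ := key y x hx
      exact ⟨v, hvAt, hv⟩
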